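/- arXiv:1310.6705 — 2 statements merged into one kernel-verified Lean document; each statement's English description precedes it below -/
import Mathlib

section
/- Let k be a field of characteristic ≠ 2 and let a, b, d, w ∈ k× with w a norm from k(√d)/k. If the quadratic form ⟨1, -a, -b, abd⟩ is isotropic over k, then the symbol (a, b, w) is trivial in H³(k, μ₂⊗²) (equivalently, the 3-fold Pfister form ⟨⟨a, b, w⟩⟩ is hyperbolic over k). -/
/-!
STATEMENT 0 (Lemma 3.6 / `lem:ct`): Let `k` be a field of characteristic ≠ 2 and
`a, b, d, w ∈ k×` with `w` a norm from `k(√d)/k` (i.e. `w = g² - d·h²`).  If the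
quadratic form `⟨1, -a, -b, abd⟩` is isotropic over `k`, then the symbol
`(a, b, w) ∈ H³(k, μ₂⊗²)` is trivial; equivalently (as stated in the context),
the 3-fold Pfister form `⟨⟨a, b, w⟩⟩ = ⟨1,-a⟩⊗⟨1,-b⟩⊗⟨1,-w⟩` is hyperbolic, i.e.
equivalent to the split form `⟨1,-1,1,-1,1,-1,1,-1⟩`.
-/


open QuadraticMap Matrix

section Infra

variable {k : Type} [Field k]

private lemma equiv_of_mats {n : ℕ} (w₁ w₂ : Fin n → k) (M N : Matrix (Fin n) (Fin n) k)
    (hMN : ∀ x : Fin n → k, M.mulVec (N.mulVec x) = x)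
    (hNM : ∀ x : Fin n → k, N.mulVec (M.mulVec x) = x)
    (hq : ∀ x : Fin n → k,
      weightedSumSquares k w₂ (M.mulVec x) = weightedSumSquares k w₁ x) :
    QuadraticMap.Equivalent (weightedSumSquares k w₁) (weightedSumSquares k w₂) :=
  ⟨{ toLinearMap := M.mulVecLin
     invFun := N.mulVec
     left_inv := fun x => hNM x
     right_inv := fun x => hMN x
     map_app' := hq }⟩

private lemma equiv_congr {n : ℕ} {v1 v1' v2 v2' : Fin n → k} (h1 : v1 = v1') (h2 : v2 = v2')
    (h : QuadraticMap.Equivalent (weightedSumSquares k v1) (weightedSumSquares k v2)) :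
    QuadraticMap.Equivalent (weightedSumSquares k v1') (weightedSumSquares k v2') :=
  h1 ▸ h2 ▸ h

private lemma pv2eq {a b c d : k} (h0 : a = c) (h1 : b = d) :
    ![a, b] = ![c, d] := by subst h0; subst h1; rfl

/-- regroup a weighted sum of squares over `Fin 8` as a `pi` of binary forms -/
private def groupEquiv (e : Fin 8 ≃ Fin 4 × Fin 2) :
    (Fin 8 → k) ≃ₗ[k] (∀ _i : Fin 4, Fin 2 → k) where
  toFun x i j := x (e.symm (i, j))
  map_add' x y := rfl
  map_smul' c x := rfl
  invFun y m := y (e m).1 (e m).2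
  left_inv x := by funext m; simp
  right_inv y := by funext i j; simp

private lemma ws_pi_equiv (e : Fin 8 ≃ Fin 4 × Fin 2) (W : Fin 4 → Fin 2 → k)
    (v : Fin 8 → k) (hv : ∀ m, v m = W (e m).1 (e m).2) :
    QuadraticMap.Equivalent (weightedSumSquares k v)
      (QuadraticMap.pi (fun i => weightedSumSquares k (W i))) := by
  refine ⟨{ toLinearEquiv := groupEquiv e, map_app' := fun x => ?_ }⟩
  simp only [groupEquiv, pi_apply, weightedSumSquares_apply, LinearEquiv.coe_mk]
  have h1 : ∑ i : Fin 8, v i • (x i * x i)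
      = ∑ p : Fin 4 × Fin 2, W p.1 p.2 • (x (e.symm p) * x (e.symm p)) := by
    rw [← Equiv.sum_comp e
      (fun p : Fin 4 × Fin 2 => W p.1 p.2 • (x (e.symm p) * x (e.symm p)))]
    exact Finset.sum_congr rfl fun m _ => by rw [hv m, Equiv.symm_apply_apply]
  rw [h1, Fintype.sum_prod_type]

private lemma step8 {v v' : Fin 8 → k} (e e' : Fin 8 ≃ Fin 4 × Fin 2)
    (W W' : Fin 4 → Fin 2 → k)
    (hv : ∀ m, v m = W (e m).1 (e m).2) (hv' : ∀ m, v' m = W' (e' m).1 (e' m).2)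
    (hW : ∀ i, QuadraticMap.Equivalent (weightedSumSquares k (W i))
      (weightedSumSquares k (W' i))) :
    QuadraticMap.Equivalent (weightedSumSquares k v) (weightedSumSquares k v') :=
  (ws_pi_equiv e W v hv).trans
    ((QuadraticMap.Equivalent.pi hW).trans (ws_pi_equiv e' W' v' hv').symm)

/-- `⟨c, -c⟩ ≃ ⟨1, -1⟩` -/
private lemma bin_pair (h2 : (2:k) ≠ 0) (c : k) (hc : c ≠ 0) :
    QuadraticMap.Equivalent (weightedSumSquares k ![c, -c])
      (weightedSumSquares k ![(1:k), -1]) := by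
  apply equiv_of_mats _ _ !![(c+1)/2, (c-1)/2; (c-1)/2, (c+1)/2]
      !![(c⁻¹+1)/2, (c⁻¹-1)/2; (c⁻¹-1)/2, (c⁻¹+1)/2]
  · intro x; funext i
    fin_cases i <;>
      · simp [Matrix.mulVec, dotProduct, Fin.sum_univ_succ]
        field_simp
        ring
  · intro x; funext i
    fin_cases i <;>
      · simp [Matrix.mulVec, dotProduct, Fin.sum_univ_succ]
        field_simp
        ring
  · intro x
    simp [weightedSumSquares_apply, Matrix.mulVec, dotProduct, Fin.sum_univ_succ, smul_eq_mul]
    field_simp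
    ring

/-- `⟨c s², c' t²⟩ ≃ ⟨c, c'⟩` -/
private lemma bin_scale (c c' s t : k) (hs : s ≠ 0) (ht : t ≠ 0) :
    QuadraticMap.Equivalent (weightedSumSquares k ![c * s^2, c' * t^2])
      (weightedSumSquares k ![c, c']) := by
  apply equiv_of_mats _ _ !![s, 0; 0, t] !![s⁻¹, 0; 0, t⁻¹]
  · intro x; funext i
    fin_cases i <;>
      · simp [Matrix.mulVec, dotProduct, Fin.sum_univ_succ]
        field_simp
  · intro x; funext i
    fin_cases i <;>
      · simp [Matrix.mulVec, dotProduct, Fin.sum_univ_succ]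
        field_simp
  · intro x
    simp [weightedSumSquares_apply, Matrix.mulVec, dotProduct, Fin.sum_univ_succ, smul_eq_mul]
    ring

/-- representation lemma: if `p x² + q y² = r ≠ 0` then `⟨c r, c p q r⟩ ≃ ⟨c p, c q⟩` -/
private lemma bin_rep (c p q x y : k) (hr : p * x^2 + q * y^2 ≠ 0) :
    QuadraticMap.Equivalent
      (weightedSumSquares k ![c * (p * x^2 + q * y^2), c * p * q * (p * x^2 + q * y^2)])
      (weightedSumSquares k ![c * p, c * q]) := by
  apply equiv_of_mats _ _ !![x, -(q*y); y, p*x]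
      !![p*x/(p * x^2 + q * y^2), q*y/(p * x^2 + q * y^2);
         -y/(p * x^2 + q * y^2), x/(p * x^2 + q * y^2)]
  · intro z; funext i
    fin_cases i <;>
      · simp [Matrix.mulVec, dotProduct, Fin.sum_univ_succ]
        generalize hD : p * x^2 + q * y^2 = D at hr ⊢
        field_simp
        subst hD
        ring
  · intro z; funext i
    fin_cases i <;>
      · simp [Matrix.mulVec, dotProduct, Fin.sum_univ_succ]
        generalize hD : p * x^2 + q * y^2 = D at hr ⊢
        field_simp
        subst hD
        ring
  · intro z
    simp [weightedSumSquares_apply, Matrix.mulVec, dotProduct, Fin.sum_univ_succ, smul_eq_mul]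
    ring

/-- norm multiplicativity: if `w = g² - d h² ≠ 0` then `⟨c w, -(d c w)⟩ ≃ ⟨c, -(d c)⟩` -/
private lemma bin_norm (c d g h w : k) (hw : w ≠ 0) (hwn : w = g^2 - d * h^2) :
    QuadraticMap.Equivalent (weightedSumSquares k ![c * w, -(d * c * w)])
      (weightedSumSquares k ![c, -(d * c)]) := by
  subst hwn
  apply equiv_of_mats _ _ !![g, d*h; h, g]
      !![g/(g^2 - d * h^2), -(d*h)/(g^2 - d * h^2);
         -h/(g^2 - d * h^2), g/(g^2 - d * h^2)]
  · intro z; funext i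
    fin_cases i <;>
      · simp [Matrix.mulVec, dotProduct, Fin.sum_univ_succ]
        generalize hD : g^2 - d * h^2 = D at hw ⊢
        field_simp
        subst hD
        ring
  · intro z; funext i
    fin_cases i <;>
      · simp [Matrix.mulVec, dotProduct, Fin.sum_univ_succ]
        generalize hD : g^2 - d * h^2 = D at hw ⊢
        field_simp
        subst hD
        ring
  · intro z
    simp [weightedSumSquares_apply, Matrix.mulVec, dotProduct, Fin.sum_univ_succ, smul_eq_mul]
    ring

/-- groupings of `Fin 8` into four pairs -/
private def eNat : Fin 8 ≃ Fin 4 × Fin 2 where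
  toFun m := (![0,0,1,1,2,2,3,3] m, ![0,1,0,1,0,1,0,1] m)
  invFun p := ![![0,1],![2,3],![4,5],![6,7]] p.1 p.2
  left_inv := by decide
  right_inv := by decide

private def eCross : Fin 8 ≃ Fin 4 × Fin 2 where
  toFun m := (![0,1,2,3,0,1,2,3] m, ![0,0,0,0,1,1,1,1] m)
  invFun p := ![![0,4],![1,5],![2,6],![3,7]] p.1 p.2
  left_inv := by decide
  right_inv := by decide

private def eII : Fin 8 ≃ Fin 4 × Fin 2 where
  toFun m := (![0,1,0,1,2,3,2,3] m, ![0,0,1,1,0,0,1,1] m)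
  invFun p := ![![0,2],![1,3],![4,6],![5,7]] p.1 p.2
  left_inv := by decide
  right_inv := by decide

private def eA1 : Fin 8 ≃ Fin 4 × Fin 2 where
  toFun m := (![0,1,1,0,2,3,3,2] m, ![0,0,1,1,0,0,1,1] m)
  invFun p := ![![0,3],![1,2],![4,7],![5,6]] p.1 p.2
  left_inv := by decide
  right_inv := by decide

private def eB1 : Fin 8 ≃ Fin 4 × Fin 2 where
  toFun m := (![0,0,1,1,2,3,3,2] m, ![0,1,0,1,0,0,1,1] m)
  invFun p := ![![0,1],![2,3],![4,7],![5,6]] p.1 p.2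
  left_inv := by decide
  right_inv := by decide

end Infra
section Cases

variable {k : Type} [Field k]

private lemma caseI (h2 : (2:k) ≠ 0) (a b w c : k) (hb : b ≠ 0) (hw : w ≠ 0)
    (hc : c ≠ 0) (hac : a = c^2) :
    QuadraticMap.Equivalent
      (weightedSumSquares k ![1, -a, -b, a * b, -w, a * w, b * w, -(a * b * w)])
      (weightedSumSquares k ![(1:k), -1, 1, -1, 1, -1, 1, -1]) := by
  refine step8 eNat eNat
    ![![1, -a], ![-b, a*b], ![-w, a*w], ![b*w, -(a*b*w)]]
    ![![1, -1], ![1, -1], ![1, -1], ![1, -1]]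
    ?_ ?_ ?_
  · intro m; fin_cases m <;> rfl
  · intro m; fin_cases m <;> rfl
  intro i
  fin_cases i
  · exact equiv_congr (pv2eq (by ring) (by rw [hac]; ring)) rfl
      (bin_scale 1 (-1) 1 c one_ne_zero hc)
  · exact (equiv_congr (pv2eq (by ring) (by rw [hac]; ring)) rfl
      (bin_scale (-b) b 1 c one_ne_zero hc)).trans
      (equiv_congr (pv2eq rfl (by ring)) rfl (bin_pair h2 (-b) (neg_ne_zero.2 hb)))
  · exact (equiv_congr (pv2eq (by ring) (by rw [hac]; ring)) rfl
      (bin_scale (-w) w 1 c one_ne_zero hc)).trans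
      (equiv_congr (pv2eq rfl (by ring)) rfl (bin_pair h2 (-w) (neg_ne_zero.2 hw)))
  · exact (equiv_congr (pv2eq (by ring) (by rw [hac]; ring)) rfl
      (bin_scale (b*w) (-(b*w)) 1 c one_ne_zero hc)).trans
      (equiv_congr (pv2eq rfl (by ring)) rfl (bin_pair h2 (b*w) (mul_ne_zero hb hw)))

private lemma caseII (h2 : (2:k) ≠ 0) (a b w p q : k) (ha : a ≠ 0) (hb : b ≠ 0)
    (hw : w ≠ 0) (hbn : b = p^2 - a*q^2) :
    QuadraticMap.Equivalent
      (weightedSumSquares k ![1, -a, -b, a * b, -w, a * w, b * w, -(a * b * w)])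
      (weightedSumSquares k ![(1:k), -1, 1, -1, 1, -1, 1, -1]) := by
  have stepA : QuadraticMap.Equivalent
      (weightedSumSquares k ![1, -a, -b, a * b, -w, a * w, b * w, -(a * b * w)])
      (weightedSumSquares k ![1, -a, -1, a, -w, a*w, w, -(a*w)]) := by
    refine step8 eNat eNat
      ![![1, -a], ![-b, a*b], ![-w, a*w], ![b*w, -(a*b*w)]]
      ![![1, -a], ![-1, a], ![-w, a*w], ![w, -(a*w)]]
      ?_ ?_ ?_
    · intro m; fin_cases m <;> rfl
    · intro m; fin_cases m <;> rfl
    intro i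
    fin_cases i
    · exact QuadraticMap.Equivalent.refl _
    · exact equiv_congr (pv2eq (by ring) (by ring)) (pv2eq (by ring) (by ring))
        (bin_norm (-1) a p q b hb hbn)
    · exact QuadraticMap.Equivalent.refl _
    · exact equiv_congr (pv2eq (by ring) (by ring)) (pv2eq rfl rfl)
        (bin_norm w a p q b hb hbn)
  refine stepA.trans ?_
  refine step8 eII eNat
    ![![1, -1], ![-a, a], ![-w, w], ![a*w, -(a*w)]]
    ![![1, -1], ![1, -1], ![1, -1], ![1, -1]]
    ?_ ?_ ?_
  · intro m; fin_cases m <;> rfl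
  · intro m; fin_cases m <;> rfl
  intro i
  fin_cases i
  · exact QuadraticMap.Equivalent.refl _
  · exact equiv_congr (pv2eq rfl (by ring)) rfl (bin_pair h2 (-a) (neg_ne_zero.2 ha))
  · exact equiv_congr (pv2eq rfl (by ring)) rfl (bin_pair h2 (-w) (neg_ne_zero.2 hw))
  · exact equiv_congr (pv2eq rfl rfl) rfl (bin_pair h2 (a*w) (mul_ne_zero ha hw))

private lemma caseIIIA (h2 : (2:k) ≠ 0) (a b w α β u₁ u₂ u₃ g h' : k)
    (ha : a ≠ 0) (hb : b ≠ 0) (hw : w ≠ 0) (hα : α ≠ 0) (hβ : β ≠ 0)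
    (hαd : α = -(a*u₁^2) - b*u₂^2) (hβd : β = α + a*b*u₃^2)
    (hwn : w = g^2 - (-β)*h'^2) :
    QuadraticMap.Equivalent
      (weightedSumSquares k ![1, -a, -b, a * b, -w, a * w, b * w, -(a * b * w)])
      (weightedSumSquares k ![(1:k), -1, 1, -1, 1, -1, 1, -1]) := by
  have hr1 : (-a)*u₁^2 + (-b)*u₂^2 ≠ 0 := fun hc => hα (by rw [hαd]; linear_combination hc)
  have hr2 : α*1^2 + (a*b)*u₃^2 ≠ 0 := fun hc => hβ (by rw [hβd]; linear_combination hc)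
  have step1 : QuadraticMap.Equivalent
      (weightedSumSquares k ![1, -a, -b, a * b, -w, a * w, b * w, -(a * b * w)])
      (weightedSumSquares k ![1, α, a*b*α, a*b, -w, -(w*α), -(a*b*w*α), -(a*b*w)]) := by
    refine step8 eA1 eA1
      ![![1, a*b], ![-a, -b], ![-w, -(a*b*w)], ![a*w, b*w]]
      ![![1, a*b], ![α, a*b*α], ![-w, -(a*b*w)], ![-(w*α), -(a*b*w*α)]]
      ?_ ?_ ?_
    · intro m; fin_cases m <;> rfl
    · intro m; fin_cases m <;> rfl
    intro i
    fin_cases i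
    · exact QuadraticMap.Equivalent.refl _
    · exact (equiv_congr (pv2eq (by rw [hαd]; ring) (by rw [hαd]; ring))
        (pv2eq (by ring) (by ring)) (bin_rep 1 (-a) (-b) u₁ u₂ hr1)).symm
    · exact QuadraticMap.Equivalent.refl _
    · exact (equiv_congr (pv2eq (by rw [hαd]; ring) (by rw [hαd]; ring))
        (pv2eq (by ring) (by ring)) (bin_rep (-w) (-a) (-b) u₁ u₂ hr1)).symm
  have step2 : QuadraticMap.Equivalent
      (weightedSumSquares k ![1, α, a*b*α, a*b, -w, -(w*α), -(a*b*w*α), -(a*b*w)])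
      (weightedSumSquares k ![1, β, a*b*α, a*b*α*β, -w, -(w*β), -(a*b*w*α), -(a*b*w*α*β)]) := by
    refine step8 eII eII
      ![![1, a*b*α], ![α, a*b], ![-w, -(a*b*w*α)], ![-(w*α), -(a*b*w)]]
      ![![1, a*b*α], ![β, a*b*α*β], ![-w, -(a*b*w*α)], ![-(w*β), -(a*b*w*α*β)]]
      ?_ ?_ ?_
    · intro m; fin_cases m <;> rfl
    · intro m; fin_cases m <;> rfl
    intro i
    fin_cases i
    · exact QuadraticMap.Equivalent.refl _
    · exact (equiv_congr (pv2eq (by rw [hβd]; ring) (by rw [hβd]; ring))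
        (pv2eq (by ring) (by ring)) (bin_rep 1 α (a*b) 1 u₃ hr2)).symm
    · exact QuadraticMap.Equivalent.refl _
    · exact (equiv_congr (pv2eq (by rw [hβd]; ring) (by rw [hβd]; ring))
        (pv2eq (by ring) (by ring)) (bin_rep (-w) α (a*b) 1 u₃ hr2)).symm
  have step3 : QuadraticMap.Equivalent
      (weightedSumSquares k ![1, β, a*b*α, a*b*α*β, -w, -(w*β), -(a*b*w*α), -(a*b*w*α*β)])
      (weightedSumSquares k ![1, β, a*b*α, a*b*α*β, -1, -β, -(a*b*α), -(a*b*α*β)]) := by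
    refine step8 eNat eNat
      ![![1, β], ![a*b*α, a*b*α*β], ![-w, -(w*β)], ![-(a*b*w*α), -(a*b*w*α*β)]]
      ![![1, β], ![a*b*α, a*b*α*β], ![-1, -β], ![-(a*b*α), -(a*b*α*β)]]
      ?_ ?_ ?_
    · intro m; fin_cases m <;> rfl
    · intro m; fin_cases m <;> rfl
    intro i
    fin_cases i
    · exact QuadraticMap.Equivalent.refl _
    · exact QuadraticMap.Equivalent.refl _
    · exact equiv_congr (pv2eq (by ring) (by ring)) (pv2eq rfl (by ring))
        (bin_norm (-1) (-β) g h' w hw hwn)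
    · exact equiv_congr (pv2eq (by ring) (by ring)) (pv2eq rfl (by ring))
        (bin_norm (-(a*b*α)) (-β) g h' w hw hwn)
  have step4 : QuadraticMap.Equivalent
      (weightedSumSquares k ![1, β, a*b*α, a*b*α*β, -1, -β, -(a*b*α), -(a*b*α*β)])
      (weightedSumSquares k ![(1:k), -1, 1, -1, 1, -1, 1, -1]) := by
    refine step8 eCross eNat
      ![![1, -1], ![β, -β], ![a*b*α, -(a*b*α)], ![a*b*α*β, -(a*b*α*β)]]
      ![![1, -1], ![1, -1], ![1, -1], ![1, -1]]
      ?_ ?_ ?_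
    · intro m; fin_cases m <;> rfl
    · intro m; fin_cases m <;> rfl
    intro i
    fin_cases i
    · exact QuadraticMap.Equivalent.refl _
    · exact bin_pair h2 β hβ
    · exact bin_pair h2 (a*b*α) (mul_ne_zero (mul_ne_zero ha hb) hα)
    · exact bin_pair h2 (a*b*α*β) (mul_ne_zero (mul_ne_zero (mul_ne_zero ha hb) hα) hβ)
  exact step1.trans (step2.trans (step3.trans step4))

private lemma caseIIIB (h2 : (2:k) ≠ 0) (a b w g h' : k)
    (ha : a ≠ 0) (hb : b ≠ 0) (hw : w ≠ 0)
    (hwn : w = g^2 - (-(a*b))*h'^2) :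
    QuadraticMap.Equivalent
      (weightedSumSquares k ![1, -a, -b, a * b, -w, a * w, b * w, -(a * b * w)])
      (weightedSumSquares k ![(1:k), -1, 1, -1, 1, -1, 1, -1]) := by
  have step1 : QuadraticMap.Equivalent
      (weightedSumSquares k ![1, -a, -b, a * b, -w, a * w, b * w, -(a * b * w)])
      (weightedSumSquares k ![1, -a, -b, a*b, -1, a, a^2*b, -(a*b)]) := by
    refine step8 eB1 eB1
      ![![1, -a], ![-b, a*b], ![-w, -(a*b*w)], ![a*w, b*w]]
      ![![1, -a], ![-b, a*b], ![-1, -(a*b)], ![a, a^2*b]]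
      ?_ ?_ ?_
    · intro m; fin_cases m <;> rfl
    · intro m; fin_cases m <;> rfl
    intro i
    fin_cases i
    · exact QuadraticMap.Equivalent.refl _
    · exact QuadraticMap.Equivalent.refl _
    · exact equiv_congr (pv2eq (by ring) (by ring)) (pv2eq (by ring) (by ring))
        (bin_norm (-1) (-(a*b)) g h' w hw hwn)
    · refine (equiv_congr (pv2eq (by ring) (by field_simp)) rfl
        (bin_scale (a*w) (a^2*b*w) 1 a⁻¹ one_ne_zero (inv_ne_zero ha))).trans ?_
      exact equiv_congr (pv2eq rfl (by ring)) (pv2eq rfl (by ring))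
        (bin_norm a (-(a*b)) g h' w hw hwn)
  refine step1.trans ?_
  refine step8 eCross eNat
    ![![1, -1], ![-a, a], ![-b, a^2*b], ![a*b, -(a*b)]]
    ![![1, -1], ![1, -1], ![1, -1], ![1, -1]]
    ?_ ?_ ?_
  · intro m; fin_cases m <;> rfl
  · intro m; fin_cases m <;> rfl
  intro i
  fin_cases i
  · exact QuadraticMap.Equivalent.refl _
  · exact equiv_congr (pv2eq rfl (by ring)) rfl (bin_pair h2 (-a) (neg_ne_zero.2 ha))
  · refine (equiv_congr (pv2eq (by ring) (by ring)) rfl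
      (bin_scale (-b) b 1 a one_ne_zero ha)).trans ?_
    exact equiv_congr (pv2eq rfl (by ring)) rfl (bin_pair h2 (-b) (neg_ne_zero.2 hb))
  · exact bin_pair h2 (a*b) (mul_ne_zero ha hb)

end Cases

section Main

variable {k : Type} [Field k]

private lemma ws_int_eq :
    weightedSumSquares k (![1, -1, 1, -1, 1, -1, 1, -1] : Fin 8 → ℤ)
      = weightedSumSquares k ![(1:k), -1, 1, -1, 1, -1, 1, -1] := by
  ext x
  simp [weightedSumSquares_apply, Fin.sum_univ_succ]

end Main

theorem stmt_0 (k : Type) [Field k] (hchar : (2 : k) ≠ 0)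
    (a b d w : k) (ha : a ≠ 0) (hb : b ≠ 0) (hd : d ≠ 0) (hw : w ≠ 0)
    (hnorm : ∃ g h : k, w = g ^ 2 - d * h ^ 2)
    (hiso : ∃ x : Fin 4 → k,
      QuadraticMap.weightedSumSquares k ![1, -a, -b, a * b * d] x = 0 ∧ x ≠ 0) :
    QuadraticMap.Equivalent
      (QuadraticMap.weightedSumSquares k
        ![1, -a, -b, a * b, -w, a * w, b * w, -(a * b * w)])
      (QuadraticMap.weightedSumSquares k
        ![1, -1, 1, -1, 1, -1, 1, -1]) := by
  obtain ⟨g, h, hgh⟩ := hnorm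
  obtain ⟨x, hx0, hxne⟩ := hiso
  rw [ws_int_eq]
  have ht : x 0^2 - a*(x 1)^2 - b*(x 2)^2 + a*b*d*(x 3)^2 = 0 := by
    simp only [weightedSumSquares_apply, smul_eq_mul, Fin.sum_univ_four,
      Matrix.cons_val_zero, Matrix.cons_val_one, Matrix.head_cons, Matrix.cons_val_two,
      Matrix.tail_cons, Matrix.cons_val_three] at hx0
    linear_combination hx0
  rcases eq_or_ne (x 3) 0 with h3 | h3
  · have ht' : x 0^2 - a*(x 1)^2 - b*(x 2)^2 = 0 := by
      rw [h3] at ht; linear_combination ht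
    rcases eq_or_ne (x 2) 0 with hz | hz
    · rcases eq_or_ne (x 1) 0 with hy | hy
      · exfalso
        have h0' : x 0 = 0 := by
          have hsq : x 0^2 = 0 := by rw [hy, hz] at ht'; linear_combination ht'
          exact pow_eq_zero_iff (two_ne_zero) |>.mp hsq
        apply hxne
        funext i
        fin_cases i
        · exact h0'
        · exact hy
        · exact hz
        · exact h3
      · have hx0ne : x 0 ≠ 0 := by
          intro h0'
          have hz' : a * (x 1)^2 = 0 := by
            rw [h0', hz] at ht'; linear_combination -ht'
          rcases mul_eq_zero.mp hz' with hh | hh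
          · exact ha hh
          · exact hy (pow_eq_zero_iff (two_ne_zero) |>.mp hh)
        refine caseI hchar a b w (x 0 / x 1) hb hw (div_ne_zero hx0ne hy) ?_
        have ht'' := ht'
        rw [hz] at ht''
        field_simp
        linear_combination -ht''
    · refine caseII hchar a b w (x 0/x 2) (x 1/x 2) ha hb hw ?_
      field_simp
      linear_combination -ht'
  · have hrep : -(d*(a*b*x 3)^2) = -(a*(b*x 2)^2) - b*(a*x 1)^2 + a*b*(x 0)^2 := by
      linear_combination (-(a*b))*ht
    have hs : a*b*x 3 ≠ 0 := mul_ne_zero (mul_ne_zero ha hb) h3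
    rcases eq_or_ne (-(a*(b*x 2)^2) - b*(a*x 1)^2) 0 with hα0 | hα0
    · rcases eq_or_ne (x 1) 0 with h1 | h1
      · have h2z : x 2 = 0 := by
          have h' : a*(b*x 2)^2 = 0 := by
            rw [h1] at hα0; linear_combination -hα0
          rcases mul_eq_zero.mp h' with hh | hh
          · exact absurd hh ha
          · have hh2 := pow_eq_zero_iff (two_ne_zero) |>.mp hh
            rcases mul_eq_zero.mp hh2 with hh' | hh'
            · exact absurd hh' hb
            · exact hh'
        have hrep' : -(d*(a*b*x 3)^2) = a*b*(x 0)^2 := by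
          rw [h1, h2z] at hrep; linear_combination hrep
        refine caseIIIB hchar a b w g (h*(x 0)/(a*b*x 3)) ha hb hw ?_
        rw [hgh]
        field_simp
        linear_combination (-h^2) * (mul_left_cancel₀ (mul_ne_zero ha hb) (by linear_combination -hrep') : x 0^2 = -(d*a*b*x 3^2))
      · refine caseII hchar a b w 0 ((b*x 2)/(a*x 1)) ha hb hw ?_
        field_simp
        exact mul_left_cancel₀ ha (by linear_combination -hα0)
    · refine caseIIIA hchar a b w (-(a*(b*x 2)^2) - b*(a*x 1)^2) (-(d*(a*b*x 3)^2))
        (b*x 2) (a*x 1) (x 0) g (h/(a*b*x 3)) ha hb hw hα0 ?_ rfl hrep ?_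
      · exact neg_ne_zero.2 (mul_ne_zero hd (pow_ne_zero _ hs))
      · rw [hgh]
        field_simp
end

section
/- Let k be a field of characteristic ≠ 2 and a, b, d, f ∈ k× such that f is a norm from k(√d)/k. Then the 3-fold Pfister form ⟨⟨-ab, -ad, f⟩⟩ contains (is isometric to an orthogonal sum involving) the 4-dimensional form d·⟨1, a, b, abd⟩ as a subform. -/
/-!
STATEMENT 1: Let `k` be a field of characteristic ≠ 2 and `a, b, d, f ∈ k×`
with `f` a norm from `k(√d)/k`.  Then the 3-fold Pfister form
`⟨⟨-ab, -ad, f⟩⟩ = ⟨1,ab⟩⊗⟨1,ad⟩⊗⟨1,-f⟩` contains the 4-dimensional form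
`d·⟨1, a, b, abd⟩` as a subform: there is a 4-dimensional quadratic form `r`
over `k` with `⟨⟨-ab, -ad, f⟩⟩ ≅ d⟨1,a,b,abd⟩ ⊥ r`.
-/

section Aux

variable {α : Type*}

private lemma vec8_4' (x0 x1 x2 x3 x4 x5 x6 x7 : α) : ![x0,x1,x2,x3,x4,x5,x6,x7] 4 = x4 := rfl
private lemma vec8_5' (x0 x1 x2 x3 x4 x5 x6 x7 : α) : ![x0,x1,x2,x3,x4,x5,x6,x7] 5 = x5 := rfl
private lemma vec8_6' (x0 x1 x2 x3 x4 x5 x6 x7 : α) : ![x0,x1,x2,x3,x4,x5,x6,x7] 6 = x6 := rfl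
private lemma vec8_7' (x0 x1 x2 x3 x4 x5 x6 x7 : α) : ![x0,x1,x2,x3,x4,x5,x6,x7] 7 = x7 := rfl

/-- If `f = g² - d h²` is a nonzero norm from `k(√d)`, then `d` is represented by
the binary form `⟨1, -f⟩`, i.e. `d = s² - f t²` for some `s, t`. -/
private lemma exists_st (k : Type) [Field k] (hchar : (2 : k) ≠ 0) (d f g h : k)
    (hf : f ≠ 0) (hgh : f = g ^ 2 - d * h ^ 2) :
    ∃ s t : k, s ^ 2 - f * t ^ 2 = d := by
  by_cases hh : h = 0
  · have hg : g ≠ 0 := by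
      intro hg0
      apply hf
      rw [hgh, hg0, hh]; ring
    refine ⟨(d + 1) / 2, (d - 1) / (2 * g), ?_⟩
    rw [hgh, hh]
    field_simp
    ring
  · refine ⟨g / h, 1 / h, ?_⟩
    have : d * h ^ 2 = g ^ 2 - f := by rw [hgh]; ring
    field_simp
    linear_combination -this

end Aux

set_option maxHeartbeats 1000000 in
theorem stmt_1 (k : Type) [Field k] (hchar : (2 : k) ≠ 0)
    (a b d f : k) (ha : a ≠ 0) (hb : b ≠ 0) (hd : d ≠ 0) (hf : f ≠ 0)
    (hnorm : ∃ g h : k, f = g ^ 2 - d * h ^ 2) :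
    ∃ r : QuadraticMap k (Fin 4 → k) k,
      QuadraticMap.Equivalent
        (QuadraticMap.weightedSumSquares k
          ![1, a * b, a * d, a * b * (a * d),
            -f, -(f * (a * b)), -(f * (a * d)), -(f * (a * b * (a * d)))])
        (QuadraticMap.prod
          (QuadraticMap.weightedSumSquares k ![d, d * a, d * b, d * (a * b * d)])
          r) := by
  obtain ⟨g, h, hgh⟩ := hnorm
  obtain ⟨s, t, hst⟩ := exists_st k hchar d f g h hf hgh
  refine ⟨QuadraticMap.weightedSumSquares k
      ![-(d * f), -(f * (a * b)), -(f * (a * d)), -(f * (a * b * (a * d)))], ⟨?_⟩⟩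
  refine
    { toFun := fun v =>
        (![(s * v 0 - f * t * v 4) / d, v 2, a * v 3, v 1 / d],
         ![(s * v 4 - t * v 0) / d, v 5, v 6, v 7])
      invFun := fun p =>
        ![s * p.1 0 + f * t * p.2 0, d * p.1 3, p.1 1, p.1 2 / a,
          t * p.1 0 + s * p.2 0, p.2 1, p.2 2, p.2 3]
      map_add' := by
        intro x y
        refine Prod.ext ?_ ?_ <;> funext i <;> fin_cases i <;>
          simp [Pi.add_apply] <;> ring
      map_smul' := by
        intro c x
        refine Prod.ext ?_ ?_ <;> funext i <;> fin_cases i <;>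
          simp [Pi.smul_apply, smul_eq_mul] <;> ring
      left_inv := by
        intro v
        funext i
        fin_cases i <;>
          simp [vec8_4', vec8_5', vec8_6', vec8_7'] <;>
          (try field_simp) <;>
          first
            | linear_combination v 0 * hst
            | linear_combination v 4 * hst
      right_inv := by
        intro p
        refine Prod.ext ?_ ?_ <;> funext i <;> fin_cases i <;>
          simp [vec8_4', vec8_5', vec8_6', vec8_7'] <;>
          (try field_simp) <;>
          first
            | linear_combination p.1 0 * hst
            | linear_combination p.2 0 * hst
      map_app' := by
        intro v
        simp only [QuadraticMap.prod_apply, QuadraticMap.weightedSumSquares_apply,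
          Fin.sum_univ_four, Fin.sum_univ_eight, smul_eq_mul, Matrix.cons_val_zero,
          Matrix.cons_val_one, Matrix.head_cons,
          vec8_4', vec8_5', vec8_6', vec8_7', Matrix.cons_val_two, Matrix.cons_val_three,
          Matrix.tail_cons]
        field_simp
        first
          | linear_combination d * (v 0 ^ 2 - f * v 4 ^ 2) * hst
          | linear_combination (v 0 ^ 2 - f * v 4 ^ 2) * hst }
end
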